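/- (Lagrange inversion, applied case) If f(y) = e^y, then the compositional inverse of x = y/f(y) = y·e^{-y} is given by y = Σ_{k≥1} [(d/dy)^{k-1}(e^{ky})|_{y=0}] x^k/k! = Σ_{k≥1} k^{k-1} x^k/k!. -/

import Mathlib

section AbelAux
open Finset Polynomial
open scoped fwdDiff

noncomputable def fpow (d : ℕ) : ℚ → ℚ[X] := fun t => (X + C t) ^ d

lemma fwdDiff_fpow (d : ℕ) :
    Δ_[(1:ℚ)] (fpow d) = ∑ j ∈ range d, (d.choose j) • fpow j := by
  funext t
  have hA : (X + C (t + 1) : ℚ[X]) = (X + C t) + 1 := by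
    rw [map_add, map_one]; ring
  simp only [fwdDiff, fpow, hA, Finset.sum_apply, Pi.smul_apply]
  rw [add_pow, Finset.sum_range_succ]
  simp only [Nat.choose_self, Nat.cast_one, one_pow, mul_one]
  rw [add_sub_cancel_right]
  apply Finset.sum_congr rfl
  intro j _
  rw [nsmul_eq_mul]
  ring

lemma fd (d : ℕ) : ∀ n, d < n → (Δ_[(1:ℚ)])^[n] (fpow d) = 0 := by
  induction d using Nat.strong_induction_on with
  | _ d IH =>
    intro n hn
    obtain ⟨m, rfl⟩ : ∃ m, n = m + 1 := ⟨n - 1, (Nat.succ_pred_eq_of_pos (Nat.pos_of_ne_zero (by omega))).symm⟩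
    rw [Function.iterate_succ_apply, fwdDiff_fpow, fwdDiff_iter_finset_sum]
    apply Finset.sum_eq_zero
    intro j hj
    have hj' := Finset.mem_range.mp hj
    rw [fwdDiff_iter_const_smul, IH j hj' m (by omega), smul_zero]

lemma fd_sum (n : ℕ) (hn : 1 ≤ n) :
    ∑ k ∈ range (n+1), ((-1:ℤ)^(n-k) * n.choose k) • ((X + C (k:ℚ))^(n-1) : ℚ[X]) = 0 := by
  have h := fwdDiff_iter_eq_sum_shift (1:ℚ) (fpow (n-1)) n 0
  rw [fd (n-1) n (by omega)] at h
  simp only [Pi.zero_apply, fpow, nsmul_eq_mul, mul_one, zero_add] at h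
  exact h.symm

lemma choose_id (n k : ℕ) : (n+1).choose k * (n+1-k) = (n+1) * n.choose k := by
  rw [Nat.add_one_mul_choose_eq, ← Nat.choose_succ_right_eq]

lemma poly_ext_deriv {p q : Polynomial ℚ[X]} (r : ℚ[X]) (hd : derivative p = derivative q)
    (he : eval r p = eval r q) : p = q := by
  have h0 : derivative (p - q) = 0 := by rw [derivative_sub, hd, sub_self]
  have hc := Polynomial.eq_C_of_derivative_eq_zero h0
  have := congrArg (eval r) hc
  rw [eval_sub, eval_C, he, sub_self] at this
  have : p - q = 0 := by rw [hc, ← this, map_zero]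
  linear_combination this

lemma abel_poly : ∀ (n : ℕ) (y₀ : ℚ[X]),
    (X + C (y₀ + (n:ℚ[X])))^n
      + ∑ k ∈ Icc 1 n, C ((n.choose k : ℚ[X]) * (X * (X + (k:ℚ[X]))^(k-1)))
          * (X + C (y₀ + ((n-k : ℕ):ℚ[X])))^(n-k)
    = (X + C (X + y₀ + (n:ℚ[X])))^n := by
  intro n
  induction n with
  | zero => intro y₀; simp
  | succ n ih =>
    intro y₀
    apply poly_ext_deriv (-(X + y₀ + ((n:ℚ[X])+1)))
    · rw [derivative_add, derivative_sum, derivative_X_add_C_pow, derivative_X_add_C_pow]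
      rw [Finset.sum_Icc_succ_top (by omega : 1 ≤ n+1)]
      have htop : derivative (C (((n+1).choose (n+1) : ℚ[X]) * (X * (X + (((n+1):ℕ):ℚ[X]))^((n+1)-1)))
          * (X + C (y₀ + ((((n+1))-(n+1) : ℕ):ℚ[X])))^((n+1)-(n+1))) = 0 := by
        rw [Nat.sub_self, pow_zero, mul_one, derivative_C]
      rw [htop, add_zero]
      have hterm : ∀ k ∈ Icc 1 n,
          derivative (C (((n+1).choose k : ℚ[X]) * (X * (X + (k:ℚ[X]))^(k-1)))
            * (X + C (y₀ + ((((n+1))-k : ℕ):ℚ[X])))^((n+1)-k))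
          = C (((n:ℚ[X])+1)) * (C ((n.choose k : ℚ[X]) * (X * (X + (k:ℚ[X]))^(k-1)))
            * (X + C ((y₀+1) + ((n-k : ℕ):ℚ[X])))^(n-k)) := by
        intro k hk
        obtain ⟨hk1, hk2⟩ := Finset.mem_Icc.mp hk
        rw [derivative_C_mul, derivative_X_add_C_pow]
        have e1 : (n+1) - k - 1 = n - k := by omega
        have e2 : y₀ + (((n+1)-k:ℕ):ℚ[X]) = (y₀ + 1) + ((n-k:ℕ):ℚ[X]) := by
          have h3 : ((n+1)-k:ℕ) = (n-k)+1 := by omega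
          rw [h3]; push_cast; ring
        have e3 : ((((n+1)-k:ℕ)):ℚ[X]) * ((n+1).choose k : ℚ[X])
            = ((n:ℚ[X])+1) * (n.choose k : ℚ[X]) := by
          have h4 := choose_id n k
          have h5 : (((n+1).choose k * ((n+1)-k) : ℕ) : ℚ[X]) = (((n+1) * n.choose k : ℕ) : ℚ[X]) := by
            rw [h4]
          push_cast at h5
          linear_combination h5
        rw [e1, e2, ← mul_assoc, ← mul_assoc, ← map_mul]
        rw [← mul_assoc, ← map_mul]
        congr 2
        linear_combination (X * (X + (k:ℚ[X]))^(k-1)) * e3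
      rw [Finset.sum_congr rfl hterm, ← Finset.mul_sum]
      have e4 : y₀ + (((n+1):ℕ):ℚ[X]) = (y₀+1) + (n:ℚ[X]) := by push_cast; ring
      have e5 : ((((n+1):ℕ)):ℚ[X]) = ((n:ℚ[X])+1) := by push_cast; ring
      rw [e4, e5, ← mul_add]
      simp only [Nat.add_sub_cancel]
      rw [ih (y₀+1)]
      congr 3
      ring
    · simp only [eval_add, eval_pow, eval_mul, eval_X, eval_C, eval_finset_sum]
      have key := fd_sum (n+1) (by omega)
      rw [Finset.range_eq_Ico, Finset.sum_eq_sum_Ico_succ_bot (by omega), Finset.Ico_add_one_right_eq_Icc] at key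
      simp only [Nat.add_sub_cancel, zero_add] at key
      have hR : (-(X + y₀ + ((n:ℚ[X])+1)) + (X + y₀ + (((n+1):ℕ):ℚ[X])))^(n+1) = 0 := by
        rw [show (-(X + y₀ + ((n:ℚ[X])+1)) + (X + y₀ + (((n+1):ℕ):ℚ[X]))) = 0 by push_cast; ring]
        exact zero_pow (by omega)
      rw [hR]
      have hstep : ∀ k ∈ Icc 1 (n+1),
          (((n+1).choose k : ℚ[X]) * (X * (X + (k:ℚ[X]))^(k-1)))
            * (-(X + y₀ + ((n:ℚ[X])+1)) + (y₀ + ((((n+1)-k : ℕ)):ℚ[X])))^((n+1)-k)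
          = X * ((((-1:ℤ)^((n+1)-k) * (n+1).choose k)) • ((X + C ((k:ℕ):ℚ))^n)) := by
        intro k hk
        obtain ⟨hk1, hk2⟩ := Finset.mem_Icc.mp hk
        have hbase : (-(X + y₀ + ((n:ℚ[X])+1)) + (y₀ + ((((n+1)-k : ℕ)):ℚ[X])))
            = -(X + (k:ℚ[X])) := by
          rw [show ((n+1)-k : ℕ) = (n+1)-k from rfl, Nat.cast_sub (by omega)]
          push_cast
          ring
        have hC : (C ((k:ℕ):ℚ) : ℚ[X]) = (k:ℚ[X]) := by
          rw [map_natCast]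
        have hpow : (X + (k:ℚ[X]))^(k-1) * (X + (k:ℚ[X]))^((n+1)-k) = (X + (k:ℚ[X]))^n := by
          rw [← pow_add]
          congr 1
          omega
        rw [hbase, hC, zsmul_eq_mul, neg_pow]
        push_cast
        linear_combination (((-1:ℚ[X])^((n+1)-k) * (n+1).choose k) * X) * hpow
      rw [Finset.sum_congr rfl hstep, ← Finset.mul_sum]
      have hfirst : (-(X + y₀ + ((n:ℚ[X])+1)) + (y₀ + (((n+1):ℕ):ℚ[X])))^(n+1)
          = X * ((((-1:ℤ)^((n+1)-0) * (n+1).choose 0)) • ((X + C ((0:ℕ):ℚ))^n)) := by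
        rw [show (-(X + y₀ + ((n:ℚ[X])+1)) + (y₀ + (((n+1):ℕ):ℚ[X]))) = -X by push_cast; ring]
        rw [zsmul_eq_mul, Nat.sub_zero, neg_pow]
        push_cast
        simp only [Nat.choose_zero_right, Nat.cast_one, mul_one, map_zero, add_zero]
        ring
      rw [hfirst, ← mul_add, key, mul_zero]

lemma abelA (n : ℕ) :
    ∑ k ∈ Icc 1 n, (n.choose k : ℚ) * (k:ℚ)^(k-1) * ((n-k : ℕ):ℚ)^(n-k)
      = (n:ℚ)^(n-1) * n := by
  have H1 := congrArg (Polynomial.eval (0:ℚ[X])) (abel_poly n 0)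
  simp only [eval_add, eval_pow, eval_mul, eval_X, eval_C, eval_finset_sum, zero_add, add_zero] at H1
  have H2 := congrArg (fun p : ℚ[X] => p.coeff 1) H1
  simp only [coeff_add] at H2
  rw [show ((n:ℚ[X]))^n = C ((n:ℚ)^n) by rw [← C_eq_natCast, ← map_pow], coeff_C] at H2
  rw [show (X + (n:ℚ[X]))^n = (X + C ((n:ℚ)))^n by rw [C_eq_natCast],
    coeff_X_add_C_pow, Nat.choose_one_right] at H2
  rw [Polynomial.finset_sum_coeff] at H2
  have hterm : ∀ k ∈ Icc 1 n,
      ((n.choose k : ℚ[X]) * (X * (X + (k:ℚ[X]))^(k-1)) * (((n-k:ℕ)):ℚ[X])^(n-k)).coeff 1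
        = (n.choose k : ℚ) * (k:ℚ)^(k-1) * ((n-k : ℕ):ℚ)^(n-k) := by
    intro k hk
    have : ((n.choose k : ℚ[X]) * (X * (X + (k:ℚ[X]))^(k-1)) * ((((n-k:ℕ)):ℚ[X]))^(n-k))
        = C ((n.choose k : ℚ) * (((n-k:ℕ)):ℚ)^(n-k)) * (X * (X + C ((k:ℚ)))^(k-1)) := by
      simp only [map_mul, map_pow, map_natCast]
      push_cast
      ring
    rw [this, coeff_C_mul, coeff_X_mul, coeff_X_add_C_pow, Nat.choose_zero_right, Nat.sub_zero]
    push_cast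
    ring
  rw [Finset.sum_congr rfl hterm] at H2
  simpa using H2

end AbelAux

open PowerSeries Finset

lemma deriv_rescale_exp (c : ℚ) : d⁄dX ℚ (rescale c (exp ℚ)) = c • rescale c (exp ℚ) := by
  ext n
  rw [coeff_derivative, map_smul, coeff_rescale, coeff_rescale, coeff_exp, coeff_exp]
  rw [Nat.factorial_succ]
  have h1 : (n.factorial : ℚ) ≠ 0 := by positivity
  push_cast
  field_simp
  ring_nf
  simp [h1]

lemma iter_smul (m : ℕ) (c : ℚ) (g : PowerSeries ℚ) :
    (fun f => d⁄dX ℚ f)^[m] (c • g) = c • (fun f => d⁄dX ℚ f)^[m] g := by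
  induction m generalizing g with
  | zero => rfl
  | succ m ih => rw [Function.iterate_succ_apply, Function.iterate_succ_apply, Derivation.map_smul, ih]

lemma part1 (k : ℕ) (m : ℕ) :
    constantCoeff ((fun f => d⁄dX ℚ f)^[m] (rescale (k : ℚ) (exp ℚ))) = (k : ℚ) ^ m := by
  induction m with
  | zero =>
      simp only [Function.iterate_zero, id_eq, pow_zero, ← coeff_zero_eq_constantCoeff_apply,
        coeff_rescale, coeff_exp]
      simp
  | succ m ih =>
      rw [Function.iterate_succ_apply, deriv_rescale_exp, iter_smul]
      rw [show ((k:ℚ) • (fun f => d⁄dX ℚ f)^[m] (rescale (k:ℚ) (exp ℚ))) =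
        C (k:ℚ) * (fun f => d⁄dX ℚ f)^[m] (rescale (k:ℚ) (exp ℚ)) by
          rw [smul_eq_C_mul], map_mul, constantCoeff_C, ih]
      ring



noncomputable def tw : PowerSeries ℚ := PowerSeries.mk fun k =>
  if k = 0 then 0 else ((k : ℚ) ^ (k - 1)) / (k.factorial : ℚ)

lemma coeff_tw (n : ℕ) :
    coeff n tw = if n = 0 then 0 else ((n:ℚ)^(n-1))/(n.factorial : ℚ) := by
  simp [tw]

lemma coeff_tw' (n : ℕ) (hn : 1 ≤ n) :
    coeff n tw = ((n:ℚ)^(n-1))/(n.factorial : ℚ) := by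
  rw [coeff_tw, if_neg (by omega)]

lemma tw_zero : coeff 0 tw = 0 := by simp [tw]

-- the key convolution identity, from Abel's identity
lemma key_sum (n : ℕ) (hn : 1 ≤ n) :
    ∑ k ∈ range (n+1), (coeff k tw) * (((n-k:ℕ)):ℚ) * (coeff (n-k) tw)
      = (n:ℚ)^(n-1) * n / n.factorial - (n:ℚ)^(n-1)/n.factorial := by
  have habel := abelA n
  rw [show n = (n-1)+1 by omega] at habel
  rw [Finset.sum_Icc_succ_top (by omega : 1 ≤ (n-1)+1)] at habel
  rw [show (n-1)+1 = n by omega] at habel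
  rw [Nat.sub_self, Nat.choose_self] at habel
  -- habel : ∑ k ∈ Icc 1 (n-1), ... + 1 * n^(n-1) * 0^0 = n^(n-1)*n
  have hsub : ∑ k ∈ range (n+1), (coeff k tw) * (((n-k:ℕ)):ℚ) * (coeff (n-k) tw)
      = ∑ k ∈ Icc 1 (n-1), (coeff k tw) * (((n-k:ℕ)):ℚ) * (coeff (n-k) tw) := by
    symm
    apply Finset.sum_subset
    · intro k hk
      simp only [Finset.mem_Icc] at hk
      simp only [Finset.mem_range]
      omega
    · intro k hk1 hk2
      simp only [Finset.mem_range] at hk1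
      simp only [Finset.mem_Icc, not_and_or, not_le] at hk2
      rcases hk2 with h | h
      · interval_cases k
        rw [tw_zero]; ring
      · have : n - k = 0 := by omega
        rw [this]; push_cast; ring
  rw [hsub]
  have hterm : ∀ k ∈ Icc 1 (n-1),
      (coeff k tw) * (((n-k:ℕ)):ℚ) * (coeff (n-k) tw)
        = ((n.choose k : ℚ) * (k:ℚ)^(k-1) * ((n-k : ℕ):ℚ)^(n-k)) / n.factorial := by
    intro k hk
    obtain ⟨hk1, hk2⟩ := Finset.mem_Icc.mp hk
    rw [coeff_tw' k hk1, coeff_tw' (n-k) (by omega)]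
    obtain ⟨a, ha⟩ : ∃ a, n - k = a + 1 := ⟨n-k-1, by omega⟩
    have hfac : ((n.choose k : ℚ)) * (k.factorial : ℚ) * ((n-k).factorial : ℚ) = (n.factorial : ℚ) := by
      have := Nat.choose_mul_factorial_mul_factorial (show k ≤ n by omega)
      push_cast [← this]
      ring
    rw [ha] at hfac ⊢
    have hf1 : (k.factorial : ℚ) ≠ 0 := Nat.cast_ne_zero.mpr (Nat.factorial_ne_zero k)
    have hf2 : (((a+1)).factorial : ℚ) ≠ 0 := Nat.cast_ne_zero.mpr (Nat.factorial_ne_zero (a+1))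
    have hf3 : (n.factorial : ℚ) ≠ 0 := Nat.cast_ne_zero.mpr (Nat.factorial_ne_zero n)
    rw [eq_div_iff hf3, ← hfac, Nat.add_sub_cancel]
    field_simp
    ring
  rw [Finset.sum_congr rfl hterm, ← Finset.sum_div]
  norm_num at habel
  rw [show ∑ k ∈ Icc 1 (n-1), (n.choose k : ℚ) * (k:ℚ)^(k-1) * ((n-k : ℕ):ℚ)^(n-k)
      = (n:ℚ)^(n-1) * n - (n:ℚ)^(n-1) by linear_combination habel]
  ring

lemma coeff_X_mul_any (f : PowerSeries ℚ) (n : ℕ) :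
    coeff n (X * f) = if n = 0 then 0 else coeff (n-1) f := by
  cases n with
  | zero => simp
  | succ n => rw [coeff_succ_X_mul, if_neg (by omega), Nat.add_sub_cancel]

lemma tw_ode : X * (d⁄dX ℚ tw) = tw + tw * (X * d⁄dX ℚ tw) := by
  ext n
  rcases Nat.eq_zero_or_pos n with rfl | hn
  · rw [map_add, coeff_X_mul_any, if_pos rfl, coeff_mul]
    simp [tw_zero]
  · rw [map_add, coeff_X_mul_any, if_neg (by omega), coeff_derivative,
      show n - 1 + 1 = n by omega, coeff_mul, Finset.Nat.sum_antidiagonal_eq_sum_range_succ_mk]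
    have hterm : ∀ k ∈ range (n+1),
        coeff k tw * coeff (n-k) (X * d⁄dX ℚ tw)
          = coeff k tw * (((n-k:ℕ)):ℚ) * coeff (n-k) tw := by
      intro k hk
      rw [coeff_X_mul_any]
      rcases eq_or_ne (n-k) 0 with h | h
      · rw [if_pos h, h]; simp
      · rw [if_neg h, coeff_derivative, show n-k-1+1 = n-k by omega]
        have hc : ((n-k-1:ℕ):ℚ) = ((n-k:ℕ):ℚ) - 1 := by
          rw [show n-k-1 = (n-k)-1 from rfl, Nat.cast_sub (by omega)]; push_cast; ring
        push_cast
        rw [hc]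
        ring
    rw [Finset.sum_congr rfl hterm, key_sum n hn, coeff_tw' n hn]
    have hcast : ((n-1:ℕ):ℚ) = (n:ℚ) - 1 := by
      rw [Nat.cast_sub (by omega)]; push_cast; ring
    push_cast
    rw [hcast]
    ring

lemma coeff_pow_lt : ∀ (j n : ℕ), n < j → coeff n (tw ^ j) = 0 := by
  intro j
  induction j with
  | zero => intro n h; omega
  | succ j ih =>
    intro n h
    rw [pow_succ, mul_comm, coeff_mul, Finset.Nat.sum_antidiagonal_eq_sum_range_succ_mk]
    apply Finset.sum_eq_zero
    intro k hk
    have hk' := Finset.mem_range.mp hk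
    rcases eq_or_ne k 0 with rfl | hk0
    · rw [tw_zero, zero_mul]
    · rw [ih (n-k) (by omega), mul_zero]

noncomputable def F (m : ℕ) : PowerSeries ℚ :=
  ∑ j ∈ range m, (((-1 : ℚ) ^ j / (j.factorial : ℚ)) • tw ^ j)

noncomputable def E : PowerSeries ℚ := PowerSeries.mk fun n => coeff n (F (n+1))

lemma coeff_F (n m m' : ℕ) (h : n < m) (h' : n < m') :
    coeff n (F m) = coeff n (F m') := by
  have key : ∀ M, n < M → coeff n (F M) = coeff n (F (n+1)) := by
    intro M hM
    rw [F, F, map_sum, map_sum]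
    symm
    apply Finset.sum_subset
    · intro j hj; simp only [Finset.mem_range] at *; omega
    · intro j hj1 hj2
      simp only [Finset.mem_range, not_lt] at hj2
      rw [map_smul, coeff_pow_lt j n (by omega), smul_zero]
  rw [key m h, key m' h']

lemma coeff_E (n m : ℕ) (h : n < m) : coeff n E = coeff n (F m) := by
  rw [E, coeff_mk]
  exact coeff_F n (n+1) m (by omega) h

lemma E_zero : constantCoeff E = 1 := by
  rw [← coeff_zero_eq_constantCoeff_apply, coeff_E 0 1 (by omega), F]
  simp

lemma F_deriv (m : ℕ) : d⁄dX ℚ (F (m+1)) = -(d⁄dX ℚ tw) * F m := by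
  rw [F, map_sum, Finset.sum_range_succ']
  have h0 : d⁄dX ℚ (((-1:ℚ)^0 / ((0:ℕ).factorial : ℚ)) • tw ^ 0) = 0 := by
    simp
  rw [h0, add_zero, F, Finset.mul_sum]
  apply Finset.sum_congr rfl
  intro i _
  rw [Derivation.map_smul, Derivation.leibniz_pow, Nat.add_sub_cancel, smul_eq_C_mul,
    nsmul_eq_mul, smul_eq_mul, smul_eq_C_mul]
  have hC : ((-1:ℚ)^(i+1) / ((i+1).factorial : ℚ)) * (((i+1 : ℕ)):ℚ) = -((-1:ℚ)^i / (i.factorial : ℚ)) := by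
    rw [Nat.factorial_succ]
    have h1 : ((i.factorial : ℚ)) ≠ 0 := Nat.cast_ne_zero.mpr (Nat.factorial_ne_zero i)
    have h2 : ((i:ℚ)+1) ≠ 0 := by positivity
    push_cast
    field_simp
    ring
  have hCC : (PowerSeries.C) ((-1:ℚ)^(i+1) / ((i+1).factorial : ℚ)) * (((i+1:ℕ)):PowerSeries ℚ)
      = - (PowerSeries.C) ((-1:ℚ)^i / (i.factorial : ℚ)) := by
    rw [← map_natCast (PowerSeries.C) (i+1), ← map_mul, ← map_neg]
    exact congrArg _ hC
  push_cast at hCC ⊢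
  linear_combination (tw ^ i * d⁄dX ℚ tw) * hCC

lemma mul_coeff_congr (f g h : PowerSeries ℚ) (n : ℕ)
    (hgh : ∀ i, i ≤ n → coeff i g = coeff i h) :
    coeff n (f * g) = coeff n (f * h) := by
  rw [coeff_mul, coeff_mul]
  apply Finset.sum_congr rfl
  intro p hp
  have := Finset.HasAntidiagonal.mem_antidiagonal.mp hp
  rw [hgh p.2 (by omega)]

lemma E_deriv : d⁄dX ℚ E = -(d⁄dX ℚ tw) * E := by
  ext n
  rw [coeff_derivative, coeff_E (n+1) (n+2) (by omega), ← coeff_derivative, F_deriv]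
  exact mul_coeff_congr _ _ _ n (fun i hi => (coeff_E i (n+1) (by omega)).symm)

lemma main_coeff (n : ℕ) : coeff n (tw * E) = coeff n (X : PowerSeries ℚ) := by
  have hDA : d⁄dX ℚ (tw * E) = (d⁄dX ℚ tw) * E - tw * ((d⁄dX ℚ tw) * E) := by
    rw [Derivation.leibniz, E_deriv, smul_eq_mul, smul_eq_mul]
    ring
  have hXDA : X * d⁄dX ℚ (tw * E) = tw * E := by
    rw [hDA]
    linear_combination E * tw_ode
  rcases Nat.lt_or_ge n 2 with h2 | h2
  · interval_cases n
    · rw [coeff_mul]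
      simp [tw_zero]
    · have had : (antidiagonal 1 : Finset (ℕ×ℕ)) = {(0,1),(1,0)} := by decide
      rw [coeff_mul, had, Finset.sum_pair (by decide)]
      have h1 : coeff 1 tw = 1 := by rw [coeff_tw' 1 (by omega)]; norm_num
      have hE0 : coeff 0 E = 1 := by rw [coeff_zero_eq_constantCoeff_apply]; exact E_zero
      rw [tw_zero, h1, hE0, coeff_X]
      norm_num
  · have hc := congrArg (coeff n) hXDA
    rw [coeff_X_mul_any, if_neg (by omega), coeff_derivative,
      show n - 1 + 1 = n by omega] at hc
    have hcast : ((n-1:ℕ):ℚ) + 1 = (n:ℚ) := by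
      rw [Nat.cast_sub (by omega)]; push_cast; ring
    have hzero : coeff n (tw * E) = 0 := by
      have hne : (n:ℚ) - 1 ≠ 0 := by
        have : (2:ℚ) ≤ (n:ℚ) := by exact_mod_cast h2
        intro hcon
        nlinarith
      have : coeff n (tw * E) * ((n:ℚ) - 1) = 0 := by
        push_cast at hc
        linear_combination hc - coeff n (tw * E) * hcast
      exact (mul_eq_zero.mp this).resolve_right hne
    rw [hzero, coeff_X, if_neg (by omega)]


/-- **Lagrange inversion, applied case.** For `f(y) = e^y`, the Lagrange
inversion coefficients are `(d/dy)^{k-1}(e^{ky})|_{y=0} = k^{k-1}`, and the series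
`y = Σ_{k≥1} k^{k-1} x^k/k!` is the compositional inverse of `x = y·e^{-y}`, i.e.
substituting it into `t·e^{-t}` returns `x` (computed coefficientwise, the exponential
of a series with zero constant term being `Σ_j (-1)^j t^j/j!`). -/
theorem lagrange_inversion_exponential_case
    (w : PowerSeries ℚ)
    (hw : w = PowerSeries.mk fun k =>
      if k = 0 then 0 else ((k : ℚ) ^ (k - 1)) / (k.factorial : ℚ)) :
    (∀ k : ℕ, 1 ≤ k →
      constantCoeff ((fun f => d⁄dX ℚ f)^[k - 1] (rescale (k : ℚ) (exp ℚ)))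
        = (k : ℚ) ^ (k - 1))
    ∧ ∀ n : ℕ,
        coeff n (w * ∑ j ∈ Finset.range (n + 1),
            (((-1 : ℚ) ^ j / (j.factorial : ℚ)) • w ^ j))
          = coeff n (X : PowerSeries ℚ) := by
  constructor
  · intro k hk
    exact part1 k (k-1)
  · intro n
    have hwtw : w = tw := hw
    rw [hwtw]
    have hF : (∑ j ∈ Finset.range (n + 1), (((-1 : ℚ) ^ j / (j.factorial : ℚ)) • tw ^ j))
        = F (n+1) := rfl
    rw [hF, mul_coeff_congr tw (F (n+1)) E n
      (fun i hi => (coeff_E i (n+1) (by omega)).symm)]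
    exact main_coeff n
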